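/- Let α, β be 2×2 complex matrices satisfying α² = 1, β² = β, βαβ = 0, e₁ᵀαe₁ = 1, e₁ᵀ(αβα)e₁ = 0, e₁ᵀ(αβ)e₁ = 0, e₁ᵀ(βα)e₁ = 1, e₁ᵀβe₁ = 1. Then for noncommuting indeterminates X, Y in a tensor algebra, e₁ᵀ (αX + βY)^{n−1} e₁ = Σ over tuples (v₁,…,v_k; w₁,…,w_k; p) with v₁ ≥ 0, v₂,…,v_k ≥ 1, wⱼ ≥ 1, p ≥ 0 and 2|v| + |w| + p = n − 1 of (X²)^{v₁} Y^{w₁} ⋯ (X²)^{v_k} Y^{w_k} X^{p}. -/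

import Mathlib

open FreeAlgebra

/-- The free (tensor) algebra on two noncommuting indeterminates `X`, `Y`. -/
abbrev TensAlg : Type := FreeAlgebra ℂ (Fin 2)

/-- The indeterminate `X`. -/
noncomputable def Xg : TensAlg := FreeAlgebra.ι ℂ (0 : Fin 2)

/-- The indeterminate `Y`. -/
noncomputable def Yg : TensAlg := FreeAlgebra.ι ℂ (1 : Fin 2)

/-- The word `(X²)^{v₁} Y^{w₁} ⋯ (X²)^{v_k} Y^{w_k} X^{p}` encoded by a list of pairs
`(vᵢ, wᵢ)` together with `p`. -/
noncomputable def wordOf (x : List (ℕ × ℕ) × ℕ) : TensAlg :=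
  (x.1.map fun q => (Xg * Xg) ^ q.1 * Yg ^ q.2).prod * Xg ^ x.2

/-- The admissible tuples of total degree `m`: `v₁ ≥ 0`, `v₂,…,v_k ≥ 1`, `wⱼ ≥ 1`, `p ≥ 0`
with `2|v| + |w| + p = m`. -/
def admissible (m : ℕ) : Set (List (ℕ × ℕ) × ℕ) :=
  {x | (∀ q ∈ x.1.tail, 1 ≤ q.1) ∧ (∀ q ∈ x.1, 1 ≤ q.2) ∧
    2 * (x.1.map Prod.fst).sum + (x.1.map Prod.snd).sum + x.2 = m}

-- auxiliary development
abbrev Tup : Type := List (ℕ × ℕ) × ℕ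

noncomputable def wordOfR (y : Tup) : TensAlg := wordOf (y.1.reverse, y.2)

def degT (y : Tup) : ℕ := 2 * (y.1.map Prod.fst).sum + (y.1.map Prod.snd).sum + y.2

def goodR (y : Tup) : Prop := (∀ q ∈ y.1.dropLast, 1 ≤ q.1) ∧ (∀ q ∈ y.1, 1 ≤ q.2)

def sX (y : Tup) : Tup := (y.1, y.2 + 1)

def sY : Tup → Tup
  | ([], 0) => ([(0,1)], 0)
  | (q :: r, 0) => ((q.1, q.2 + 1) :: r, 0)
  | (l, p) => ((p / 2, 1) :: l, 0)

def LL : ℕ → List Tup × List Tup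
  | 0 => ([([], 0)], [])
  | n+1 => ((LL n).2.map sX ++ (LL n).1.map sY, (LL n).1.map sX)

lemma halfPos {p : ℕ} (he : Even p) (h0 : p ≠ 0) : 1 ≤ p / 2 := by
  obtain ⟨k, rfl⟩ := he; omega

lemma twoMulHalf {p : ℕ} (he : Even p) : 2 * (p / 2) = p := by
  obtain ⟨k, rfl⟩ := he; omega

lemma mem_dropLast_cons_iff {α : Type*} (q' q : α) (r : List α) :
    q' ∈ (q :: r).dropLast ↔ r ≠ [] ∧ (q' = q ∨ q' ∈ r.dropLast) := by
  cases r with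
  | nil => simp
  | cons a s => simp [List.dropLast_cons₂]

lemma degT_cons (q : ℕ × ℕ) (r : List (ℕ × ℕ)) (p : ℕ) :
    degT (q :: r, p) = 2 * q.1 + q.2 + degT (r, p) := by
  simp only [degT, List.map_cons, List.sum_cons]; ring

lemma degT_sX (y : Tup) : degT (sX y) = degT y + 1 := by
  simp only [degT, sX]; omega

lemma degT_p (y : Tup) : y.2 ≤ degT y := by
  simp only [degT]; omega

lemma sY_pos {l : List (ℕ × ℕ)} {p : ℕ} (h : p ≠ 0) :
    sY (l, p) = ((p / 2, 1) :: l, 0) := by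
  cases l <;> cases p <;> simp_all [sY]

lemma mem_LL (n : ℕ) :
    (∀ y : Tup, y ∈ (LL n).1 ↔ goodR y ∧ degT y = n ∧ Even y.2) ∧
    (∀ y : Tup, y ∈ (LL n).2 ↔ goodR y ∧ degT y = n ∧ Odd y.2) := by
  induction n with
  | zero =>
    constructor
    · rintro ⟨l, p⟩
      simp only [LL, List.mem_singleton]
      constructor
      · rintro h
        cases h
        refine ⟨⟨by simp, by simp⟩, by simp [degT], by simp⟩
      · rintro ⟨⟨h1, h2⟩, h3, h4⟩
        cases l with
        | nil => simp [degT] at h3; simp [h3]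
        | cons q r =>
          exfalso
          have := h2 q (by simp)
          simp [degT_cons] at h3
          omega
    · rintro y
      simp only [LL, List.not_mem_nil, false_iff]
      rintro ⟨-, h3, h4⟩
      have := degT_p y
      rw [h3] at this
      interval_cases h : y.2
      simp at h4
  | succ n ih =>
    obtain ⟨ihE, ihO⟩ := ih
    constructor
    · intro y
      simp only [LL, List.mem_append, List.mem_map]
      constructor
      · rintro (⟨z, hz, rfl⟩ | ⟨z, hz, rfl⟩)
        · obtain ⟨hg, hd, hodd⟩ := (ihO z).1 hz
          exact ⟨hg, by simp [degT_sX, hd], by simpa [sX] using hodd.add_one⟩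
        · obtain ⟨hg, hd, heven⟩ := (ihE z).1 hz
          obtain ⟨lz, pz⟩ := z
          rcases Nat.eq_zero_or_pos pz with rfl | hp
          · cases lz with
            | nil =>
              simp [degT] at hd
              refine ⟨⟨by simp [sY], by simp [sY]⟩, ?_, by simp [sY]⟩
              simp [sY, degT, ← hd]
            | cons q r =>
              obtain ⟨hg1, hg2⟩ := hg
              refine ⟨⟨?_, ?_⟩, ?_, by simp [sY]⟩
              · intro q' hq'
                simp only [sY] at hq'
                rw [mem_dropLast_cons_iff] at hq'
                obtain ⟨hr, hq'⟩ := hq'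
                rcases hq' with rfl | hm
                · simpa using hg1 q ((mem_dropLast_cons_iff q q r).2 ⟨hr, Or.inl rfl⟩)
                · exact hg1 q' ((mem_dropLast_cons_iff q' q r).2 ⟨hr, Or.inr hm⟩)
              · intro q' hq'
                simp only [sY] at hq'
                rcases List.mem_cons.1 hq' with rfl | hm
                · simp
                · exact hg2 q' (by simp [hm])
              · simp only [sY]
                rw [show degT ((q.1, q.2 + 1) :: r, 0) = degT ((q.1,q.2) :: r, 0) + 1 by
                  simp [degT_cons]; ring]
                simp only [Prod.mk.eta] at hd ⊢
                omega
          · have hp0 : pz ≠ 0 := by omega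
            rw [sY_pos hp0]
            obtain ⟨hg1, hg2⟩ := hg
            refine ⟨⟨?_, ?_⟩, ?_, by simp⟩
            · intro q' hq'
              rw [mem_dropLast_cons_iff] at hq'
              obtain ⟨hr, hq'⟩ := hq'
              rcases hq' with rfl | hm
              · exact halfPos heven hp0
              · exact hg1 q' hm
            · intro q' hq'
              rcases List.mem_cons.1 hq' with rfl | hm
              · simp
              · exact hg2 q' hm
            · rw [degT_cons]
              have h2 := twoMulHalf heven
              simp only [degT] at hd ⊢
              omega
      · obtain ⟨l, p⟩ := y
        rintro ⟨⟨hg1, hg2⟩, hd, heven⟩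
        rcases Nat.eq_zero_or_pos p with rfl | hp
        · -- comes from sY
          right
          cases l with
          | nil => simp [degT] at hd
          | cons q r =>
            have hw : 1 ≤ q.2 := hg2 q (by simp)
            rcases Nat.lt_or_ge q.2 2 with hw2 | hw2
            · -- q.2 = 1 : remove the pair
              have hq2 : q.2 = 1 := by omega
              rcases Nat.eq_zero_or_pos q.1 with hv | hv
              · -- q.1 = 0 : then r = []
                have hr : r = [] := by
                  cases r with
                  | nil => rfl
                  | cons q' r' =>
                    have := hg1 q ((mem_dropLast_cons_iff q q (q'::r')).2 ⟨by simp, Or.inl rfl⟩)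
                    omega
                subst hr
                have hq : q = (0, 1) := Prod.ext hv hq2
                subst hq
                refine ⟨([], 0), ?_, by simp [sY]⟩
                rw [ihE]
                refine ⟨⟨by simp, by simp⟩, ?_, by simp⟩
                simp [degT] at hd ⊢
                omega
              · -- q.1 ≥ 1 : preimage (r, 2*q.1)
                refine ⟨(r, 2 * q.1), ?_, ?_⟩
                · rw [ihE]
                  refine ⟨⟨?_, ?_⟩, ?_, ⟨q.1, by ring⟩⟩
                  · intro q' hq'
                    cases r with
                    | nil => simp at hq'
                    | cons a s =>
                      rw [mem_dropLast_cons_iff] at hq'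
                      exact hg1 q' ((mem_dropLast_cons_iff q' q (a::s)).2
                        ⟨by simp, Or.inr (by rw [mem_dropLast_cons_iff]; exact hq')⟩)
                  · intro q' hq'; exact hg2 q' (by simp [hq'])
                  · rw [degT_cons] at hd
                    simp only [degT] at hd ⊢
                    omega
                · have h0 : 2 * q.1 ≠ 0 := by omega
                  rw [sY_pos h0]
                  have h1 : 2 * q.1 / 2 = q.1 := by omega
                  rw [h1, ← hq2, Prod.mk.eta]
            · -- q.2 ≥ 2 : decrement
              refine ⟨((q.1, q.2 - 1) :: r, 0), ?_, ?_⟩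
              · rw [ihE]
                refine ⟨⟨?_, ?_⟩, ?_, by simp⟩
                · intro q' hq'
                  rw [mem_dropLast_cons_iff] at hq'
                  obtain ⟨hr, hq'⟩ := hq'
                  rcases hq' with rfl | hm
                  · simpa using hg1 q ((mem_dropLast_cons_iff q q r).2 ⟨hr, Or.inl rfl⟩)
                  · exact hg1 q' ((mem_dropLast_cons_iff q' q r).2 ⟨hr, Or.inr hm⟩)
                · intro q' hq'
                  rcases List.mem_cons.1 hq' with rfl | hm
                  · simp; omega
                  · exact hg2 q' (by simp [hm])
                · simp [degT] at hd ⊢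
                  omega
              · have : q.2 - 1 + 1 = q.2 := by omega
                simp only [sY, this, Prod.mk.eta]
        · -- comes from sX
          left
          refine ⟨(l, p - 1), ?_, ?_⟩
          · rw [ihO]
            refine ⟨⟨hg1, hg2⟩, ?_, ?_⟩
            · simp only [degT] at hd ⊢; omega
            · have hp1 : p - 1 + 1 = p := by omega
              rcases heven with ⟨k, hk⟩
              refine ⟨k - 1, by omega⟩
          · simp only [sX]
            rw [show p - 1 + 1 = p by omega]
    · intro y
      simp only [LL, List.mem_map]
      constructor
      · rintro ⟨z, hz, rfl⟩
        obtain ⟨hg, hd, he⟩ := (ihE z).1 hz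
        exact ⟨hg, by simp [degT_sX, hd], by simpa [sX] using he.add_one⟩
      · obtain ⟨l, p⟩ := y
        rintro ⟨hg, hd, hodd⟩
        have hp : p ≠ 0 := by rintro rfl; simp at hodd
        refine ⟨(l, p - 1), ?_, ?_⟩
        · rw [ihE]
          refine ⟨hg, by simp only [degT] at hd ⊢; omega, ?_⟩
          rcases hodd with ⟨k, hk⟩
          exact ⟨k, by omega⟩
        · simp only [sX]
          rw [show p - 1 + 1 = p by omega]

lemma sY_snd (y : Tup) : (sY y).2 = 0 := by
  obtain ⟨l, p⟩ := y; cases l <;> cases p <;> simp [sY]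

lemma sX_inj : Function.Injective sX := by
  rintro ⟨l, p⟩ ⟨l', p'⟩ h
  simp only [sX, Prod.mk.injEq] at h
  simp [h.1, Nat.succ_injective h.2]

lemma sY_inj {x y : Tup} (hx : goodR x) (hex : Even x.2) (hy : goodR y) (hey : Even y.2)
    (h : sY x = sY y) : x = y := by
  obtain ⟨lx, px⟩ := x; obtain ⟨ly, py⟩ := y
  rcases Nat.eq_zero_or_pos px with rfl | hpx <;> rcases Nat.eq_zero_or_pos py with rfl | hpy
  · cases lx with
    | nil =>
      cases ly with
      | nil => rfl
      | cons q r =>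
        exfalso
        simp only [sY, Prod.mk.injEq, List.cons.injEq] at h
        have := hy.2 q (by simp)
        have h2 := h.1.1
        simp [Prod.ext_iff] at h2
        omega
    | cons q r =>
      cases ly with
      | nil =>
        exfalso
        simp only [sY, Prod.mk.injEq, List.cons.injEq] at h
        have := hx.2 q (by simp)
        have h2 := h.1.1
        simp [Prod.ext_iff] at h2
        omega
      | cons q' r' =>
        simp only [sY, Prod.mk.injEq, List.cons.injEq, Prod.ext_iff] at h
        obtain ⟨⟨⟨h1, h2⟩, h3⟩, -⟩ := h
        simp only [Prod.mk.injEq, List.cons.injEq]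
        exact ⟨⟨Prod.ext h1 (by omega), h3⟩, trivial⟩
  · exfalso
    have hpy0 : py ≠ 0 := by omega
    rw [sY_pos hpy0] at h
    cases lx with
    | nil =>
      simp only [sY, Prod.mk.injEq, List.cons.injEq, Prod.ext_iff] at h
      have := halfPos hey hpy0
      omega
    | cons q r =>
      simp only [sY, Prod.mk.injEq, List.cons.injEq, Prod.ext_iff] at h
      have := hx.2 q (by simp)
      omega
  · exfalso
    have hpx0 : px ≠ 0 := by omega
    rw [sY_pos hpx0] at h
    cases ly with
    | nil =>
      simp only [sY, Prod.mk.injEq, List.cons.injEq, Prod.ext_iff] at h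
      have := halfPos hex hpx0
      omega
    | cons q r =>
      simp only [sY, Prod.mk.injEq, List.cons.injEq, Prod.ext_iff] at h
      have := hy.2 q (by simp)
      omega
  · have hpx0 : px ≠ 0 := by omega
    have hpy0 : py ≠ 0 := by omega
    rw [sY_pos hpx0, sY_pos hpy0] at h
    simp only [Prod.mk.injEq, List.cons.injEq, Prod.ext_iff] at h
    obtain ⟨⟨⟨h1, -⟩, h2⟩, -⟩ := h
    have e1 := twoMulHalf hex
    have e2 := twoMulHalf hey
    simp only [Prod.mk.injEq]
    exact ⟨h2, by omega⟩

lemma nodup_LL (n : ℕ) : ((LL n).1).Nodup ∧ ((LL n).2).Nodup := by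
  induction n with
  | zero => simp [LL]
  | succ n ih =>
    obtain ⟨ih1, ih2⟩ := ih
    constructor
    · simp only [LL]
      refine List.Nodup.append (ih2.map sX_inj) ?_ ?_
      · refine List.Nodup.map_on ?_ ih1
        intro x hx y hy hxy
        obtain ⟨hgx, -, hex⟩ := ((mem_LL n).1 x).1 hx
        obtain ⟨hgy, -, hey⟩ := ((mem_LL n).1 y).1 hy
        exact sY_inj hgx hex hgy hey hxy
      · intro a ha hb
        simp only [List.mem_map] at ha hb
        obtain ⟨z, -, rfl⟩ := ha
        obtain ⟨w, -, hw⟩ := hb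
        have := sY_snd w
        rw [hw] at this
        simp [sX] at this
    · exact ih1.map sX_inj

lemma wordOfR_sX (y : Tup) : wordOfR (sX y) = wordOfR y * Xg := by
  simp [wordOfR, wordOf, sX, pow_succ, mul_assoc]

lemma wordOfR_sY {y : Tup} (he : Even y.2) : wordOfR (sY y) = wordOfR y * Yg := by
  obtain ⟨l, p⟩ := y
  rcases Nat.eq_zero_or_pos p with rfl | hp
  · cases l with
    | nil => simp [sY, wordOfR, wordOf]
    | cons q r => simp [sY, wordOfR, wordOf, pow_succ, mul_assoc]
  · have hp0 : p ≠ 0 := by omega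
    rw [sY_pos hp0]
    have hpow : (Xg * Xg) ^ (p / 2) = Xg ^ p := by
      rw [← sq, ← pow_mul, twoMulHalf he]
    simp [wordOfR, wordOf, hpow, mul_assoc]

noncomputable def AE (n : ℕ) : TensAlg := ((LL n).1.map wordOfR).sum
noncomputable def AO (n : ℕ) : TensAlg := ((LL n).2.map wordOfR).sum

lemma AO_succ (n : ℕ) : AO (n + 1) = AE n * Xg := by
  simp only [AO, AE, LL, List.map_map]
  rw [show wordOfR ∘ sX = fun y => wordOfR y * Xg from funext wordOfR_sX]
  exact List.sum_map_mul_right _ _ _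

lemma AE_succ (n : ℕ) : AE (n + 1) = AO n * Xg + AE n * Yg := by
  simp only [AE, AO, LL, List.map_append, List.sum_append, List.map_map]
  congr 1
  · rw [show wordOfR ∘ sX = fun y => wordOfR y * Xg from funext wordOfR_sX]
    exact List.sum_map_mul_right _ _ _
  · simp only [Function.comp_def]
    rw [List.map_congr_left (fun y hy => wordOfR_sY (((mem_LL n).1 y).1 hy).2.2)]
    exact List.sum_map_mul_right _ _ _

lemma AE_zero : AE 0 = 1 := by simp [AE, LL, wordOfR, wordOf]
lemma AO_zero : AO 0 = 0 := by simp [AO, LL]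

lemma reverse_dropLast {α : Type*} (l : List α) : l.reverse.dropLast = l.tail.reverse := by
  have h := @List.tail_reverse _ l.reverse
  rw [List.reverse_reverse] at h
  rw [h, List.reverse_reverse]

lemma degT_rev (x : Tup) : degT (x.1.reverse, x.2) = degT x := by
  simp [degT, List.sum_reverse]

/-- Let `α`, `β` be `2×2` complex matrices with `α² = 1`, `β² = β`,
`βαβ = 0`, `e₁ᵀαe₁ = 1`, `e₁ᵀ(αβα)e₁ = 0`, `e₁ᵀ(αβ)e₁ = 0`, `e₁ᵀ(βα)e₁ = 1`, `e₁ᵀβe₁ = 1`.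
Then for noncommuting indeterminates `X`, `Y`,
`e₁ᵀ (αX + βY)^m e₁ = Σ (X²)^{v₁} Y^{w₁} ⋯ (X²)^{v_k} Y^{w_k} X^{p}`, the sum being over all
tuples with `v₁ ≥ 0`, `v₂,…,v_k ≥ 1`, `wⱼ ≥ 1`, `p ≥ 0` and `2|v| + |w| + p = m`. -/
theorem word_expansion (α β : Matrix (Fin 2) (Fin 2) ℂ)
    (hα2 : α * α = 1) (hβ2 : β * β = β) (hβαβ : β * α * β = 0)
    (hα11 : α 0 0 = 1) (hαβα : (α * β * α) 0 0 = 0) (hαβ : (α * β) 0 0 = 0)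
    (hβα : (β * α) 0 0 = 1) (hβ11 : β 0 0 = 1) :
    ∀ m : ℕ,
      ((α.map (algebraMap ℂ TensAlg) * Matrix.scalar (Fin 2) Xg
          + β.map (algebraMap ℂ TensAlg) * Matrix.scalar (Fin 2) Yg) ^ m) 0 0
        = ∑ᶠ x ∈ admissible m, wordOf x := by
  -- Step 1: pin down the matrix entries
  rw [Matrix.mul_apply, Fin.sum_univ_two, hα11, hβ11] at hαβ
  have hab : α 0 1 * β 1 0 = -1 := by linear_combination hαβ
  have ha0 : α 0 1 ≠ 0 := by
    intro h; rw [h, zero_mul] at hab; exact one_ne_zero (neg_eq_zero.1 hab.symm)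
  have hb0 : β 1 0 ≠ 0 := by
    intro h; rw [h, mul_zero] at hab; exact one_ne_zero (neg_eq_zero.1 hab.symm)
  have e1 := congrFun (congrFun hα2 0) 0
  have e2 := congrFun (congrFun hα2 0) 1
  rw [Matrix.mul_apply, Fin.sum_univ_two, hα11] at e1 e2
  simp only [Matrix.one_apply_eq, Matrix.one_apply_ne (by decide : (0 : Fin 2) ≠ 1),
    one_mul] at e1 e2
  have hα10 : α 1 0 = 0 := by
    rcases mul_eq_zero.1 (show α 0 1 * α 1 0 = 0 by linear_combination e1) with h | h
    · exact absurd h ha0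
    · exact h
  have hα11' : α 1 1 = -1 := by
    rcases mul_eq_zero.1 (show α 0 1 * (1 + α 1 1) = 0 by linear_combination e2) with h | h
    · exact absurd h ha0
    · linear_combination h
  have f1 := congrFun (congrFun hβ2 0) 0
  have f2 := congrFun (congrFun hβ2 1) 1
  rw [Matrix.mul_apply, Fin.sum_univ_two] at f1 f2
  rw [hβ11] at f1
  have hβ01 : β 0 1 = 0 := by
    rcases mul_eq_zero.1 (show β 0 1 * β 1 0 = 0 by linear_combination f1) with h | h
    · exact h
    · exact absurd h hb0
  rw [hβ01, mul_zero] at f2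
  have g1 := congrFun (congrFun hβαβ 1) 1
  rw [Matrix.mul_apply, Fin.sum_univ_two, Matrix.mul_apply, Fin.sum_univ_two,
    Matrix.mul_apply, Fin.sum_univ_two, hβ01, hα10, hα11'] at g1
  simp only [Matrix.zero_apply] at g1
  have hβ11' : β 1 1 = 0 := by linear_combination (-(1:ℂ)/2) * f2 + (-(1:ℂ)/2) * g1 + (β 1 1 / 2) * hab
  -- Step 2: entries of M
  set M : Matrix (Fin 2) (Fin 2) TensAlg :=
      α.map (algebraMap ℂ TensAlg) * Matrix.scalar (Fin 2) Xg
        + β.map (algebraMap ℂ TensAlg) * Matrix.scalar (Fin 2) Yg with hMdef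
  have hM : ∀ i j, M i j = α i j • Xg + β i j • Yg := by
    intro i j
    rw [hMdef]
    simp [Matrix.scalar_apply, Matrix.mul_diagonal, Matrix.map_apply, Algebra.smul_def]
  have hM00 : M 0 0 = Xg + Yg := by rw [hM 0 0, hα11, hβ11]; simp
  have hM01 : M 0 1 = α 0 1 • Xg := by rw [hM 0 1, hβ01]; simp
  have hM10 : M 1 0 = β 1 0 • Yg := by rw [hM 1 0, hα10]; simp
  have hM11 : M 1 1 = -Xg := by rw [hM 1 1, hα11', hβ11']; simp
  -- Step 3: the key induction
  have key : ∀ m : ℕ, (M ^ m) 0 0 = AE m + AO m ∧ (M ^ m) 0 1 = α 0 1 • AO m := by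
    intro m
    induction m with
    | zero =>
      simp [pow_zero, Matrix.one_apply, AE_zero, AO_zero]
    | succ m ih =>
      obtain ⟨ih0, ih1⟩ := ih
      constructor
      · rw [pow_succ, Matrix.mul_apply, Fin.sum_univ_two, ih0, ih1, hM00, hM10,
          AE_succ, AO_succ]
        rw [smul_mul_assoc, mul_smul_comm, smul_smul, hab, neg_smul, one_smul]
        rw [add_mul, mul_add, mul_add]
        abel
      · rw [pow_succ, Matrix.mul_apply, Fin.sum_univ_two, ih0, ih1, hM01, hM11,
          AO_succ]
        rw [mul_smul_comm, smul_mul_assoc, mul_neg, smul_neg]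
        rw [add_mul, smul_add]
        abel
  -- Step 4: identify the finsum with the list sum
  intro m
  rw [(key m).1]
  have hnodup : (((LL m).1 ++ (LL m).2).map (fun y : Tup => (y.1.reverse, y.2))).Nodup := by
    refine List.Nodup.map ?_ ?_
    · rintro ⟨l, p⟩ ⟨l', p'⟩ h
      simp only [Prod.mk.injEq] at h ⊢
      exact ⟨List.reverse_injective h.1, h.2⟩
    · refine List.Nodup.append (nodup_LL m).1 (nodup_LL m).2 ?_
      intro x hx hx2
      obtain ⟨-, -, he⟩ := ((mem_LL m).1 x).1 hx
      obtain ⟨-, -, ho⟩ := ((mem_LL m).2 x).1 hx2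
      exact (Nat.not_even_iff_odd.2 ho) he
  have hset : admissible m
      = ↑((((LL m).1 ++ (LL m).2).map (fun y : Tup => (y.1.reverse, y.2))).toFinset) := by
    ext x
    simp only [admissible, Set.mem_setOf_eq, List.coe_toFinset, List.mem_map, List.mem_append]
    constructor
    · rintro ⟨h1, h2, h3⟩
      refine ⟨(x.1.reverse, x.2), ?_, by simp⟩
      have hg : goodR (x.1.reverse, x.2) := by
        constructor
        · intro q hq
          rw [reverse_dropLast] at hq
          exact h1 q (List.mem_reverse.1 hq)
        · intro q hq
          exact h2 q (List.mem_reverse.1 hq)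
      have hd : degT (x.1.reverse, x.2) = m := by rw [degT_rev]; exact h3
      rcases Nat.even_or_odd x.2 with he | ho
      · exact Or.inl (((mem_LL m).1 _).2 ⟨hg, hd, he⟩)
      · exact Or.inr (((mem_LL m).2 _).2 ⟨hg, hd, ho⟩)
    · rintro ⟨y, hy, rfl⟩
      have hgd : goodR y ∧ degT y = m := by
        rcases hy with hy | hy
        · obtain ⟨a, b, -⟩ := ((mem_LL m).1 y).1 hy; exact ⟨a, b⟩
        · obtain ⟨a, b, -⟩ := ((mem_LL m).2 y).1 hy; exact ⟨a, b⟩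
      obtain ⟨⟨g1, g2⟩, hd⟩ := hgd
      refine ⟨?_, ?_, ?_⟩
      · intro q hq
        simp only [List.tail_reverse] at hq
        exact g1 q (List.mem_reverse.1 hq)
      · intro q hq
        exact g2 q (List.mem_reverse.1 hq)
      · show degT (y.1.reverse, y.2) = m
        rw [degT_rev]; exact hd
  rw [hset, finsum_mem_coe_finset, List.sum_toFinset _ hnodup, List.map_map,
    show wordOf ∘ (fun y : Tup => (y.1.reverse, y.2)) = wordOfR from rfl,
    List.map_append, List.sum_append]
  rfl
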